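/- Every finite-dimensional irreducible representation V of U_q(sl_2) of dimension d, in which all eigenvalues of K are integer powers of q, is isomorphic to M_d. -/

import Mathlib

open scoped BigOperators TensorProduct

noncomputable def qint (q : ℂ) (m : ℤ) : ℂ := (q ^ m - q ^ (-m)) / (q - q⁻¹)

noncomputable def qfact (q : ℂ) (n : ℕ) : ℂ := ∏ m ∈ Finset.range n, qint q (m + 1)

noncomputable def qbinom (q : ℂ) (n k : ℕ) : ℂ := qfact q n / (qfact q k * qfact q (n - k))

/-- The generator `K` acting on the `d`-dimensional irreducible representation `M_d`. -/
noncomputable def Kop (q : ℂ) (d : ℕ) : (Fin d → ℂ) →ₗ[ℂ] (Fin d → ℂ) where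
  toFun v := fun j => q ^ ((d : ℤ) - 1 - 2 * (j : ℤ)) * v j
  map_add' u v := by funext j; simp [mul_add]
  map_smul' c v := by funext j; simp [smul_eq_mul]; ring

/-- The generator `K⁻¹` acting on `M_d`. -/
noncomputable def Kinvop (q : ℂ) (d : ℕ) : (Fin d → ℂ) →ₗ[ℂ] (Fin d → ℂ) where
  toFun v := fun j => q ^ (-((d : ℤ) - 1 - 2 * (j : ℤ))) * v j
  map_add' u v := by funext j; simp [mul_add]
  map_smul' c v := by funext j; simp [smul_eq_mul]; ring

/-- The generator `F` acting on `M_d`: `F.e_j = e_{j+1}`, `F.e_{d-1} = 0`. -/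
noncomputable def Fop (d : ℕ) : (Fin d → ℂ) →ₗ[ℂ] (Fin d → ℂ) where
  toFun v := fun j =>
    if h : 0 < (j : ℕ) then v ⟨(j : ℕ) - 1, lt_of_le_of_lt (Nat.sub_le _ _) j.isLt⟩ else 0
  map_add' u v := by funext j; dsimp only [Pi.add_apply, Pi.smul_apply, RingHom.id_apply]; split_ifs with h <;> simp [h]
  map_smul' c v := by funext j; dsimp only [Pi.add_apply, Pi.smul_apply, RingHom.id_apply]; split_ifs with h <;> simp [h]

/-- The generator `E` acting on `M_d`: `E.e_j = [j][d-j] e_{j-1}`, `E.e_0 = 0`. -/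
noncomputable def Eop (q : ℂ) (d : ℕ) : (Fin d → ℂ) →ₗ[ℂ] (Fin d → ℂ) where
  toFun v := fun j =>
    if h : (j : ℕ) + 1 < d then
      qint q ((j : ℤ) + 1) * qint q ((d : ℤ) - ((j : ℤ) + 1)) * v ⟨(j : ℕ) + 1, h⟩
    else 0
  map_add' u v := by funext j; dsimp only [Pi.add_apply, Pi.smul_apply, RingHom.id_apply]; split_ifs with h <;> simp [h, mul_add]
  map_smul' c v := by
    funext j; dsimp only [Pi.add_apply, Pi.smul_apply, RingHom.id_apply]; split_ifs with h <;> simp [h, smul_eq_mul] <;> ring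

/-- Basis vector `e_l` of `M_d`. -/
noncomputable def bas (d : ℕ) (l : Fin d) : Fin d → ℂ := Pi.single l 1

/- ### Auxiliary lemmas -/

lemma zpow_inj' {q : ℂ} (hq : q ≠ 0) (hroot : ∀ m : ℤ, m ≠ 0 → q ^ m ≠ 1) :
    Function.Injective (fun m : ℤ => q ^ m) := by
  intro a b hab
  have hab' : q ^ a = q ^ b := hab
  by_contra h
  exact hroot (a - b) (sub_ne_zero.mpr h)
    (by rw [zpow_sub₀ hq, hab', div_self (zpow_ne_zero _ hq)])

lemma qq_ne {q : ℂ} (hq : q ≠ 0) (hroot : ∀ m : ℤ, m ≠ 0 → q ^ m ≠ 1) : q - q⁻¹ ≠ 0 := by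
  intro h
  apply hroot 2 two_ne_zero
  have hq1 : q = q⁻¹ := sub_eq_zero.mp h
  have h1 : q * q = 1 := by nth_rewrite 2 [hq1]; exact mul_inv_cancel₀ hq
  rw [show (2:ℤ) = 1 + 1 by norm_num, zpow_add₀ hq, zpow_one, h1]

lemma qint_zero (q : ℂ) : qint q 0 = 0 := by simp [qint]

lemma qint_one {q : ℂ} (h2 : q - q⁻¹ ≠ 0) : qint q 1 = 1 := by
  simp only [qint, zpow_one, zpow_neg_one]
  exact div_self h2

lemma qint_ne_zero {q : ℂ} (hq : q ≠ 0) (hroot : ∀ m : ℤ, m ≠ 0 → q ^ m ≠ 1)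
    {m : ℤ} (hm : m ≠ 0) : qint q m ≠ 0 := by
  intro h
  rw [qint, div_eq_zero_iff] at h
  rcases h with h | h
  · have h' : q ^ m = q ^ (-m) := by linear_combination h
    have := zpow_inj' hq hroot h'
    omega
  · exact qq_ne hq hroot h

lemma frac_helper (A B C D E T : ℂ) (hT : T ≠ 0)
    (h : A * B - C * D = E * T) :
    A * T⁻¹ * (B * T⁻¹) = C * T⁻¹ * (D * T⁻¹) + E * T⁻¹ := by
  linear_combination (T⁻¹ * T⁻¹) * h + E * T⁻¹ * mul_inv_cancel₀ hT

lemma qint_rec {q : ℂ} (hq : q ≠ 0) (h2 : q - q⁻¹ ≠ 0) (j m : ℤ) :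
    qint q (j + 1) * qint q (m - j) = qint q j * qint q (m + 1 - j) + qint q (m - 2 * j) := by
  have e1 : q ^ (j + 1) = q ^ j * q := by rw [zpow_add₀ hq, zpow_one]
  have e2 : q ^ (-(j + 1)) = (q ^ j)⁻¹ * q⁻¹ := by
    rw [neg_add, zpow_add₀ hq, zpow_neg, zpow_neg, zpow_one]
  have e3 : q ^ (m - j) = q ^ m * (q ^ j)⁻¹ := by rw [zpow_sub₀ hq, div_eq_mul_inv]
  have e4 : q ^ (-(m - j)) = q ^ j * (q ^ m)⁻¹ := by
    rw [neg_sub, zpow_sub₀ hq, div_eq_mul_inv]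
  have e5 : q ^ (-j : ℤ) = (q ^ j)⁻¹ := zpow_neg q j
  have e6 : q ^ (m + 1 - j) = q ^ m * q * (q ^ j)⁻¹ := by
    rw [zpow_sub₀ hq, zpow_add₀ hq, zpow_one, div_eq_mul_inv]
  have e7 : q ^ (-(m + 1 - j)) = q ^ j * ((q ^ m)⁻¹ * q⁻¹) := by
    rw [neg_sub, zpow_sub₀ hq, zpow_add₀ hq, zpow_one, div_eq_mul_inv, mul_inv]
  have e8 : q ^ (m - 2 * j) = q ^ m * ((q ^ j)⁻¹ * (q ^ j)⁻¹) := by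
    rw [zpow_sub₀ hq, two_mul, zpow_add₀ hq, div_eq_mul_inv, mul_inv]
  have e9 : q ^ (-(m - 2 * j)) = q ^ j * q ^ j * (q ^ m)⁻¹ := by
    rw [neg_sub, zpow_sub₀ hq, two_mul, zpow_add₀ hq, div_eq_mul_inv]
  simp only [qint, div_eq_mul_inv]
  apply frac_helper _ _ _ _ _ _ h2
  simp only [e1, e2, e3, e4, e5, e6, e7, e8, e9]
  have hu : q ^ j ≠ 0 := zpow_ne_zero _ hq
  have hv : q ^ m ≠ 0 := zpow_ne_zero _ hq
  generalize q ^ j = u at hu ⊢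
  generalize q ^ m = v at hv ⊢
  field_simp [hu, hv, hq]
  have hu4 : u ^ 4 * u⁻¹ ^ 4 = 1 := by rw [← mul_pow, mul_inv_cancel₀ hu, one_pow]
  have hq2 : q ^ 2 * q⁻¹ ^ 2 = 1 := by rw [← mul_pow, mul_inv_cancel₀ hq, one_pow]
  have hv2 : v ^ 2 * v⁻¹ ^ 2 = 1 := by rw [← mul_pow, mul_inv_cancel₀ hv, one_pow]
  ring

/- ### Action of the model operators on basis vectors -/

lemma bas_apply (d : ℕ) (i l : Fin d) : bas d i l = if l = i then 1 else 0 := by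
  rw [bas, Pi.single_apply]

lemma Kop_bas (q : ℂ) (d : ℕ) (i : Fin d) :
    Kop q d (bas d i) = q ^ ((d : ℤ) - 1 - 2 * (i : ℤ)) • bas d i := by
  funext l
  show q ^ ((d : ℤ) - 1 - 2 * (l : ℤ)) * bas d i l = _
  rw [Pi.smul_apply, smul_eq_mul, bas_apply]
  by_cases h : l = i
  · subst h; simp
  · simp [h]

lemma Kinvop_bas (q : ℂ) (d : ℕ) (i : Fin d) :
    Kinvop q d (bas d i) = q ^ (-((d : ℤ) - 1 - 2 * (i : ℤ))) • bas d i := by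
  funext l
  show q ^ (-((d : ℤ) - 1 - 2 * (l : ℤ))) * bas d i l = _
  rw [Pi.smul_apply, smul_eq_mul, bas_apply]
  by_cases h : l = i
  · subst h; simp
  · simp [h]

lemma Fop_bas (d : ℕ) (i : Fin d) :
    Fop d (bas d i) = if h : (i : ℕ) + 1 < d then bas d ⟨(i : ℕ) + 1, h⟩ else 0 := by
  by_cases h : (i : ℕ) + 1 < d
  · rw [dif_pos h]
    funext l
    show (if h0 : 0 < (l : ℕ) then bas d i ⟨(l : ℕ) - 1, _⟩ else 0) = bas d ⟨(i : ℕ) + 1, h⟩ l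
    by_cases h0 : 0 < (l : ℕ)
    · rw [dif_pos h0, bas_apply, bas_apply]
      have hiff : ((⟨(l : ℕ) - 1, lt_of_le_of_lt (Nat.sub_le _ _) l.isLt⟩ : Fin d) = i) ↔
          (l = ⟨(i : ℕ) + 1, h⟩) := by
        rw [Fin.ext_iff, Fin.ext_iff]
        simp only [Fin.val_mk]
        omega
      rw [if_congr hiff rfl rfl]
    · rw [dif_neg h0, bas_apply, if_neg (by rw [Fin.ext_iff]; simp only [Fin.val_mk]; omega)]
  · rw [dif_neg h]
    funext l
    show (if h0 : 0 < (l : ℕ) then bas d i ⟨(l : ℕ) - 1, _⟩ else 0) = 0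
    by_cases h0 : 0 < (l : ℕ)
    · have hl := l.isLt
      rw [dif_pos h0, bas_apply,
        if_neg (by rw [Fin.ext_iff]; simp only [Fin.val_mk]; omega)]
    · rw [dif_neg h0]

lemma Eop_bas (q : ℂ) (d : ℕ) (i : Fin d) :
    Eop q d (bas d i) = (qint q (i : ℤ) * qint q ((d : ℤ) - (i : ℤ))) •
      bas d ⟨(i : ℕ) - 1, lt_of_le_of_lt (Nat.sub_le _ _) i.isLt⟩ := by
  funext l
  show (if h : (l : ℕ) + 1 < d then
      qint q ((l : ℤ) + 1) * qint q ((d : ℤ) - ((l : ℤ) + 1)) * bas d i ⟨(l : ℕ) + 1, h⟩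
    else 0) = _
  rw [Pi.smul_apply, smul_eq_mul, bas_apply]
  by_cases h : (l : ℕ) + 1 < d
  · rw [dif_pos h, bas_apply]
    by_cases he : (l : ℕ) + 1 = (i : ℕ)
    · rw [if_pos (by exact Fin.ext (by simp only [Fin.val_mk]; omega)),
          if_pos (by exact Fin.ext (by simp only [Fin.val_mk]; omega))]
      have h1 : ((l : ℤ) + 1) = (i : ℤ) := by exact_mod_cast he
      rw [h1]
    · rw [if_neg (by rw [Fin.ext_iff]; simp only [Fin.val_mk]; omega)]
      by_cases hi0 : (i : ℕ) = 0
      · have h1 : (i : ℤ) = 0 := by exact_mod_cast hi0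
        rw [h1, qint_zero]
        ring
      · rw [if_neg (by rw [Fin.ext_iff]; simp only [Fin.val_mk]; omega)]
        ring
  · rw [dif_neg h]
    by_cases hi0 : (i : ℕ) = 0
    · have h1 : (i : ℤ) = 0 := by exact_mod_cast hi0
      rw [h1, qint_zero]
      ring
    · have hl := l.isLt
      have hi := i.isLt
      rw [if_neg (by rw [Fin.ext_iff]; simp only [Fin.val_mk]; omega)]
      ring

/-- Lemma 2.3 (uniqueness): any `d`-dimensional irreducible representation of `U_q(sl₂)`
in which all eigenvalues of `K` are integer powers of `q` is isomorphic to `M_d`.  A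
representation is encoded as a quadruple of operators satisfying the defining relations. -/
theorem irreducible_iso_Md (q : ℂ) (hq : q ≠ 0)
    (hroot : ∀ m : ℤ, m ≠ 0 → q ^ m ≠ 1) (d : ℕ) (hd : 0 < d)
    (V : Type) [AddCommGroup V] [Module ℂ V] [FiniteDimensional ℂ V]
    (hdim : Module.finrank ℂ V = d)
    (EV FV KV KinvV : V →ₗ[ℂ] V)
    (hKKinv : KV * KinvV = 1) (hKinvK : KinvV * KV = 1)
    (hKE : KV * EV = q ^ 2 • (EV * KV))
    (hKF : KV * FV = (q ^ 2)⁻¹ • (FV * KV))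
    (hEF : EV * FV - FV * EV = (q - q⁻¹)⁻¹ • (KV - KinvV))
    (hirr : ∀ p : Submodule ℂ V, (∀ v ∈ p, EV v ∈ p) → (∀ v ∈ p, FV v ∈ p) →
      (∀ v ∈ p, KV v ∈ p) → (∀ v ∈ p, KinvV v ∈ p) → p = ⊥ ∨ p = ⊤)
    (heig : ∀ μ : ℂ, Module.End.HasEigenvalue KV μ → ∃ m : ℤ, μ = q ^ m) :
    ∃ φ : V ≃ₗ[ℂ] (Fin d → ℂ),
      (∀ v, φ (EV v) = Eop q d (φ v)) ∧
      (∀ v, φ (FV v) = Fop d (φ v)) ∧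
      (∀ v, φ (KV v) = Kop q d (φ v)) ∧
      (∀ v, φ (KinvV v) = Kinvop q d (φ v)) := by
  classical
  have hqinj := zpow_inj' hq hroot
  have h2 := qq_ne hq hroot
  haveI : Nontrivial V := Module.finrank_pos_iff.mp (by rw [hdim]; exact hd)
  -- any sequence of eigenvectors with pairwise distinct eigenvalues contains `0`
  have exzero : ∀ (u : ℕ → V) (e : ℕ → ℤ), Function.Injective e →
      (∀ k, KV (u k) = q ^ (e k) • u k) → ∃ k, u k = 0 := by
    intro u e he hKu
    by_contra hcon
    push_neg at hcon
    have hinj : Function.Injective fun i : Fin (d + 1) => q ^ (e (i : ℕ)) := by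
      intro a b hab
      exact Fin.ext (he (hqinj hab))
    have li : LinearIndependent ℂ fun i : Fin (d + 1) => u (i : ℕ) :=
      Module.End.eigenvectors_linearIndependent' KV _ hinj _
        (fun i => Module.End.hasEigenvector_iff.mpr
          ⟨Module.End.mem_eigenspace_iff.mpr (hKu i), hcon i⟩)
    have hcard := li.fintype_card_le_finrank
    rw [hdim] at hcard
    simp at hcard
  -- commutation helpers
  have hKEapp : ∀ x : V, KV (EV x) = q ^ 2 • EV (KV x) := by
    intro x
    have := LinearMap.ext_iff.mp hKE x
    simpa [Module.End.mul_apply] using this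
  have hKFapp : ∀ x : V, KV (FV x) = (q ^ 2)⁻¹ • FV (KV x) := by
    intro x
    have := LinearMap.ext_iff.mp hKF x
    simpa [Module.End.mul_apply] using this
  have hEFapp : ∀ x : V, EV (FV x) = FV (EV x) + (q - q⁻¹)⁻¹ • (KV x - KinvV x) := by
    intro x
    have := LinearMap.ext_iff.mp hEF x
    simp only [LinearMap.sub_apply, Module.End.mul_apply, LinearMap.smul_apply] at this
    linear_combination (norm := module) this
  have hKinvapp : ∀ (x : V) (μ : ℂ), μ ≠ 0 → KV x = μ • x → KinvV x = μ⁻¹ • x := by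
    intro x μ hμ hx
    have h1 : KinvV (KV x) = x := by
      have := LinearMap.ext_iff.mp hKinvK x
      simpa [Module.End.mul_apply] using this
    rw [hx, map_smul] at h1
    calc KinvV x = (μ⁻¹ * μ) • KinvV x := by rw [inv_mul_cancel₀ hμ, one_smul]
    _ = μ⁻¹ • (μ • KinvV x) := by rw [smul_smul]
    _ = μ⁻¹ • x := by rw [h1]
  -- pick an eigenvector of K with eigenvalue a power of q
  obtain ⟨μ0, hμ0⟩ := Module.End.exists_eigenvalue KV
  obtain ⟨m1, hm1⟩ := heig μ0 hμ0
  obtain ⟨v0, hv0⟩ := hμ0.exists_hasEigenvector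
  have hv0K : KV v0 = q ^ m1 • v0 := by rw [← hm1]; exact hv0.apply_eq_smul
  have hv0ne : v0 ≠ 0 := hv0.right
  -- the E-chain: find a highest weight vector
  have husucc : ∀ k : ℕ, (EV ^ (k + 1)) v0 = EV ((EV ^ k) v0) := by
    intro k; rw [pow_succ', Module.End.mul_apply]
  have hKu : ∀ k : ℕ, KV ((EV ^ k) v0) = q ^ (m1 + 2 * (k : ℤ)) • (EV ^ k) v0 := by
    intro k
    induction k with
    | zero => simpa using hv0K
    | succ k ih =>
      rw [husucc, hKEapp, ih, map_smul, smul_smul, ← husucc]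
      congr 1
      rw [← zpow_natCast q 2, ← zpow_add₀ hq]
      congr 1
      push_cast
      ring
  obtain ⟨k1, hk1⟩ := exzero (fun k => (EV ^ k) v0) (fun k => m1 + 2 * (k : ℤ))
    (fun a b hab => by
      have h' : m1 + 2 * (a : ℤ) = m1 + 2 * (b : ℤ) := hab
      omega) hKu
  have hex1 : ∃ k, (EV ^ k) v0 = 0 := ⟨k1, hk1⟩
  set k0 := Nat.find hex1 with hk0
  have hk0spec : (EV ^ k0) v0 = 0 := Nat.find_spec hex1
  have hk0pos : 0 < k0 := by
    rcases Nat.eq_zero_or_pos k0 with h | h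
    · exfalso; apply hv0ne; have := hk0spec; rw [h] at this; simpa using this
    · exact h
  set w0 : V := (EV ^ (k0 - 1)) v0 with hw0def
  have hw0ne : w0 ≠ 0 := Nat.find_min hex1 (by omega)
  have hEw0 : EV w0 = 0 := by
    rw [hw0def, ← husucc, show k0 - 1 + 1 = k0 by omega]
    exact hk0spec
  set m0 : ℤ := m1 + 2 * ((k0 - 1 : ℕ) : ℤ) with hm0def
  have hKw0 : KV w0 = q ^ m0 • w0 := hKu (k0 - 1)
  -- the F-chain
  have hwsucc : ∀ j : ℕ, (FV ^ (j + 1)) w0 = FV ((FV ^ j) w0) := by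
    intro j; rw [pow_succ', Module.End.mul_apply]
  have hKw : ∀ j : ℕ, KV ((FV ^ j) w0) = q ^ (m0 - 2 * (j : ℤ)) • (FV ^ j) w0 := by
    intro j
    induction j with
    | zero => simpa using hKw0
    | succ j ih =>
      rw [hwsucc, hKFapp, ih, map_smul, smul_smul, ← hwsucc]
      congr 1
      rw [← zpow_natCast q 2, ← zpow_neg, ← zpow_add₀ hq]
      congr 1
      push_cast
      ring
  have hKinvw : ∀ j : ℕ, KinvV ((FV ^ j) w0) = q ^ (-(m0 - 2 * (j : ℤ))) • (FV ^ j) w0 := by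
    intro j
    rw [zpow_neg]
    exact hKinvapp _ _ (zpow_ne_zero _ hq) (hKw j)
  have hEw : ∀ j : ℕ, EV ((FV ^ j) w0) =
      (qint q (j : ℤ) * qint q (m0 + 1 - (j : ℤ))) • (FV ^ (j - 1)) w0 := by
    intro j
    induction j with
    | zero => simpa [qint_zero] using hEw0
    | succ j ih =>
      have step : EV ((FV ^ (j + 1)) w0) =
          (qint q (j : ℤ) * qint q (m0 + 1 - (j : ℤ))) • FV ((FV ^ (j - 1)) w0)
          + qint q (m0 - 2 * (j : ℤ)) • (FV ^ j) w0 := by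
        rw [hwsucc, hEFapp, ih, map_smul, hKw, hKinvw, ← sub_smul]
        congr 1
        rw [smul_smul]
        congr 1
        rw [qint, div_eq_mul_inv, zpow_neg]
        ring
      have step2 : (qint q (j : ℤ) * qint q (m0 + 1 - (j : ℤ))) • FV ((FV ^ (j - 1)) w0)
          = (qint q (j : ℤ) * qint q (m0 + 1 - (j : ℤ))) • (FV ^ j) w0 := by
        cases j with
        | zero => simp [qint_zero]
        | succ k => rw [show k + 1 - 1 = k from rfl, ← hwsucc]
      rw [step, step2, ← add_smul]
      have hrec := qint_rec hq h2 (j : ℤ) m0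
      have hcast : ((j + 1 : ℕ) : ℤ) = (j : ℤ) + 1 := by push_cast; ring
      rw [show (j + 1 : ℕ) - 1 = j from rfl, hcast]
      congr 1
      rw [show m0 + 1 - ((j : ℤ) + 1) = m0 - (j : ℤ) by ring, hrec]
  -- the F-chain terminates
  obtain ⟨j1, hj1⟩ := exzero (fun j => (FV ^ j) w0) (fun j => m0 - 2 * (j : ℤ))
    (fun a b hab => by
      have h' : m0 - 2 * (a : ℤ) = m0 - 2 * (b : ℤ) := hab
      omega) hKw
  have hex2 : ∃ j, (FV ^ j) w0 = 0 := ⟨j1, hj1⟩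
  obtain ⟨N, hNspec, hNne⟩ : ∃ N, (FV ^ N) w0 = 0 ∧ ∀ j, j < N → (FV ^ j) w0 ≠ 0 :=
    ⟨Nat.find hex2, Nat.find_spec hex2, fun j hj => Nat.find_min hex2 hj⟩
  have hNpos : 0 < N := by
    rcases Nat.eq_zero_or_pos N with h | h
    · exfalso; apply hw0ne; have := hNspec; rw [h] at this; simpa using this
    · exact h
  -- the span of the chain is invariant, hence everything
  set p : Submodule ℂ V := Submodule.span ℂ (Set.range fun i : Fin N => (FV ^ (i : ℕ)) w0)
    with hp
  have hgen : ∀ i : Fin N, (FV ^ (i : ℕ)) w0 ∈ p :=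
    fun i => Submodule.subset_span ⟨i, rfl⟩
  have hclosed : ∀ (T : V →ₗ[ℂ] V), (∀ i : Fin N, T ((FV ^ (i : ℕ)) w0) ∈ p) →
      ∀ v ∈ p, T v ∈ p := by
    intro T hT v hv
    induction hv using Submodule.span_induction with
    | mem x hx => obtain ⟨i, rfl⟩ := hx; exact hT i
    | zero => rw [map_zero]; exact p.zero_mem
    | add x y _ _ hx hy => rw [map_add]; exact p.add_mem hx hy
    | smul c x _ hx => rw [map_smul]; exact p.smul_mem c hx
  have htop : p = ⊤ := by
    rcases hirr p
      (hclosed EV (fun i => by rw [hEw]; exact p.smul_mem _ (hgen ⟨(i : ℕ) - 1, by omega⟩)))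
      (hclosed FV (fun i => by
        rw [← hwsucc]
        by_cases hlt : (i : ℕ) + 1 < N
        · exact hgen ⟨(i : ℕ) + 1, hlt⟩
        · have : (i : ℕ) + 1 = N := by have := i.isLt; omega
          rw [this, hNspec]; exact p.zero_mem))
      (hclosed KV (fun i => by rw [hKw]; exact p.smul_mem _ (hgen i)))
      (hclosed KinvV (fun i => by rw [hKinvw]; exact p.smul_mem _ (hgen i))) with h | h
    · exfalso
      apply hw0ne
      have : w0 ∈ p := by simpa using hgen ⟨0, hNpos⟩
      rw [h] at this
      simpa using this
    · exact h
  -- linear independence and the basis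
  have liN : LinearIndependent ℂ fun i : Fin N => (FV ^ (i : ℕ)) w0 := by
    have hinj : Function.Injective fun i : Fin N => q ^ (m0 - 2 * ((i : ℕ) : ℤ)) := by
      intro a b hab
      have := hqinj hab
      exact Fin.ext (by omega)
    exact Module.End.eigenvectors_linearIndependent' KV _ hinj _
      (fun i => Module.End.hasEigenvector_iff.mpr
        ⟨Module.End.mem_eigenspace_iff.mpr (hKw i), hNne _ i.isLt⟩)
  set b : Module.Basis (Fin N) ℂ V := Module.Basis.mk liN (by rw [← hp, htop]) with hb
  have hdN : d = N := by
    have := Module.finrank_eq_card_basis b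
    rw [hdim] at this
    simpa using this
  subst hdN
  -- identify m0
  have hm0 : m0 = (d : ℤ) - 1 := by
    have h0 : EV ((FV ^ d) w0) = 0 := by rw [hNspec, map_zero]
    rw [hEw d] at h0
    rcases smul_eq_zero.mp h0 with hc | hc
    · rcases mul_eq_zero.mp hc with hc' | hc'
      · exfalso
        exact qint_ne_zero hq hroot (Int.natCast_ne_zero.mpr hd.ne') hc'
      · have : m0 + 1 - (d : ℤ) = 0 := by
          by_contra hne
          exact qint_ne_zero hq hroot hne hc'
        omega
    · exfalso
      exact hNne (d - 1) (by omega) hc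
  -- construct the isomorphism
  set φ : V ≃ₗ[ℂ] (Fin d → ℂ) := b.equivFun with hφ
  have hφw : ∀ i : Fin d, φ (((FV ^ (i : ℕ)) w0)) = bas d i := by
    intro i
    have h1 : φ (b i) = bas d i := by
      rw [hφ, Module.Basis.equivFun_apply, Module.Basis.repr_self]
      exact Finsupp.single_eq_pi_single i 1
    rw [← h1, hb, Module.Basis.mk_apply]
  have key : ∀ (T : V →ₗ[ℂ] V) (T' : (Fin d → ℂ) →ₗ[ℂ] (Fin d → ℂ)),
      (∀ i : Fin d, φ (T ((FV ^ (i : ℕ)) w0)) = T' (bas d i)) →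
      ∀ v, φ (T v) = T' (φ v) := by
    intro T T' h v
    have heq : (φ.toLinearMap ∘ₗ T) = (T' ∘ₗ φ.toLinearMap) := by
      apply b.ext
      intro i
      simp only [LinearMap.comp_apply, LinearEquiv.coe_coe]
      rw [hb, Module.Basis.mk_apply, h i, hφw i]
    have := LinearMap.ext_iff.mp heq v
    simpa using this
  refine ⟨φ, key EV (Eop q d) ?_, key FV (Fop d) ?_, key KV (Kop q d) ?_,
    key KinvV (Kinvop q d) ?_⟩
  · intro i
    have hidx : φ ((FV ^ ((i : ℕ) - 1)) w0)
        = bas d ⟨(i : ℕ) - 1, lt_of_le_of_lt (Nat.sub_le _ _) i.isLt⟩ :=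
      hφw ⟨(i : ℕ) - 1, lt_of_le_of_lt (Nat.sub_le _ _) i.isLt⟩
    rw [hEw, map_smul, hidx, Eop_bas,
      show m0 + 1 - (((i : ℕ) : ℤ)) = (d : ℤ) - ((i : ℕ) : ℤ) from by omega]
  · intro i
    rw [← hwsucc, Fop_bas]
    by_cases hlt : (i : ℕ) + 1 < d
    · rw [dif_pos hlt]
      exact hφw ⟨(i : ℕ) + 1, hlt⟩
    · rw [dif_neg hlt]
      have : (i : ℕ) + 1 = d := by have := i.isLt; omega
      rw [this, hNspec, map_zero]
  · intro i
    rw [hKw, map_smul, hφw, Kop_bas,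
      show m0 - 2 * (((i : ℕ) : ℤ)) = (d : ℤ) - 1 - 2 * ((i : ℕ) : ℤ) from by omega]
  · intro i
    rw [hKinvw, map_smul, hφw, Kinvop_bas,
      show -(m0 - 2 * (((i : ℕ) : ℤ))) = -((d : ℤ) - 1 - 2 * ((i : ℕ) : ℤ)) from by omega]
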